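/- Every Hausdorff Fréchet–Urysohn space has open disjoint tightness. -/

import Mathlib

open Set Filter Topology

/-- A space has open disjoint tightness (ODT) if every accumulation point of an open set `U`
is an accumulation point of two disjoint open subsets of `U`. -/
def HasODT (X : Type*) [TopologicalSpace X] : Prop :=
  ∀ U : Set X, IsOpen U → ∀ x : X, AccPt x (𝓟 U) →
    ∃ U₁ U₂ : Set X, IsOpen U₁ ∧ IsOpen U₂ ∧ U₁ ⊆ U ∧ U₂ ⊆ U ∧ U₁ ∩ U₂ = ∅ ∧
      AccPt x (𝓟 U₁) ∧ AccPt x (𝓟 U₂)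

/-- Auxiliary: from a sequence in `U \ {x}` converging to `x` in a Hausdorff space,
extract a subsequence together with pairwise disjoint open subsets of `U`,
each containing one point of the subsequence. -/
lemma aux_disjoint_opens {X : Type*} [TopologicalSpace X] [T2Space X]
    (U : Set X) (hUopen : IsOpen U) (x : X) (u : ℕ → X)
    (hu : ∀ n, u n ∈ U ∧ u n ≠ x) (hconv : Filter.Tendsto u atTop (𝓝 x)) :
    ∃ (W : ℕ → Set X) (k : ℕ → ℕ), (∀ m, IsOpen (W m)) ∧ (∀ m, W m ⊆ U) ∧
      (∀ m, u (k m) ∈ W m) ∧ StrictMono k ∧ (∀ m j, m < j → W m ∩ W j = ∅) := by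
  -- the one-step construction
  have step : ∀ (V : Set X) (n : ℕ), ∃ (k : ℕ) (W V' : Set X),
      (IsOpen V → x ∈ V → n < k ∧ IsOpen V' ∧ x ∈ V' ∧ V' ⊆ V ∧ IsOpen W ∧
        W ⊆ U ∩ V ∧ u k ∈ W ∧ W ∩ V' = ∅) := by
    intro V n
    by_cases h : IsOpen V ∧ x ∈ V
    · obtain ⟨hVo, hxV⟩ := h
      have hev : ∀ᶠ k in atTop, n < k ∧ u k ∈ V :=
        (eventually_gt_atTop n).and (hconv.eventually (hVo.mem_nhds hxV))
      obtain ⟨k, hk, hkV⟩ := hev.exists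
      obtain ⟨O, V'', hOo, hV''o, hukO, hxV'', hdisj⟩ := t2_separation (hu k).2
      refine ⟨k, U ∩ V ∩ O, V ∩ V'', fun _ _ => ⟨hk, hVo.inter hV''o, ⟨hxV, hxV''⟩,
        inter_subset_left, (hUopen.inter hVo).inter hOo,
        fun y hy => ⟨hy.1.1, hy.1.2⟩, ⟨⟨(hu k).1, hkV⟩, hukO⟩, ?_⟩⟩
      apply eq_empty_iff_forall_notMem.2
      rintro y ⟨⟨_, hyO⟩, _, hyV''⟩
      exact Set.disjoint_left.mp hdisj hyO hyV''
    · exact ⟨0, ∅, ∅, fun h1 h2 => absurd ⟨h1, h2⟩ h⟩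
  choose kf Wf Vf hstep using step
  -- the state sequence: (current index, current open nbhd of x)
  set S : ℕ → ℕ × Set X :=
    fun m => Nat.rec ((0 : ℕ), (Set.univ : Set X))
      (fun _ p => (kf p.2 p.1, Vf p.2 p.1)) m with hS
  have hS0 : S 0 = (0, Set.univ) := rfl
  have hSsucc : ∀ m, S (m + 1) = (kf (S m).2 (S m).1, Vf (S m).2 (S m).1) := fun m => rfl
  -- invariant
  have hinv : ∀ m, IsOpen (S m).2 ∧ x ∈ (S m).2 := by
    intro m
    induction m with
    | zero => exact ⟨isOpen_univ, mem_univ x⟩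
    | succ m ih =>
      have h := hstep (S m).2 (S m).1 ih.1 ih.2
      rw [hSsucc]
      exact ⟨h.2.1, h.2.2.1⟩
  have hprops : ∀ m, (S m).1 < kf (S m).2 (S m).1 ∧ Vf (S m).2 (S m).1 ⊆ (S m).2 ∧
      IsOpen (Wf (S m).2 (S m).1) ∧ Wf (S m).2 (S m).1 ⊆ U ∩ (S m).2 ∧
      u (kf (S m).2 (S m).1) ∈ Wf (S m).2 (S m).1 ∧
      Wf (S m).2 (S m).1 ∩ Vf (S m).2 (S m).1 = ∅ := by
    intro m
    have h := hstep (S m).2 (S m).1 (hinv m).1 (hinv m).2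
    exact ⟨h.1, h.2.2.2.1, h.2.2.2.2.1, h.2.2.2.2.2.1, h.2.2.2.2.2.2.1, h.2.2.2.2.2.2.2⟩
  set W : ℕ → Set X := fun m => Wf (S m).2 (S m).1 with hW
  set k : ℕ → ℕ := fun m => kf (S m).2 (S m).1 with hk
  -- V is antitone
  have hanti : ∀ m j, m ≤ j → (S j).2 ⊆ (S m).2 := by
    intro m j hmj
    induction j with
    | zero => rw [Nat.le_zero.1 hmj]
    | succ j ih =>
      rcases Nat.lt_or_ge m (j + 1) with h | h
      · have h1 : (S (j + 1)).2 ⊆ (S j).2 := by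
          rw [hSsucc]; exact (hprops j).2.1
        exact h1.trans (ih (Nat.lt_succ_iff.1 h))
      · rw [Nat.le_antisymm hmj h]
  refine ⟨W, k, fun m => (hprops m).2.2.1, fun m => ((hprops m).2.2.2.1).trans inter_subset_left,
    fun m => (hprops m).2.2.2.2.1, ?_, ?_⟩
  · apply strictMono_nat_of_lt_succ
    intro m
    have h1 : k m = (S (m + 1)).1 := by rw [hSsucc]
    have h2 := (hprops (m + 1)).1
    show k m < kf (S (m + 1)).2 (S (m + 1)).1
    rw [h1]; exact h2
  · intro m j hmj
    apply eq_empty_iff_forall_notMem.2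
    rintro y ⟨hym, hyj⟩
    have h1 : W j ⊆ (S j).2 := ((hprops j).2.2.2.1).trans inter_subset_right
    have h2 : (S j).2 ⊆ (S (m + 1)).2 := hanti (m + 1) j hmj
    have h3 : (S (m + 1)).2 = Vf (S m).2 (S m).1 := by rw [hSsucc]
    have h4 : W m ∩ Vf (S m).2 (S m).1 = ∅ := (hprops m).2.2.2.2.2
    exact eq_empty_iff_forall_notMem.1 h4 y ⟨hym, h3 ▸ h2 (h1 hyj)⟩

/-- Proposition 13: every Hausdorff Fréchet–Urysohn space has open disjoint tightness. -/
theorem stmt_14 (X : Type*) [TopologicalSpace X] [T2Space X] [FrechetUrysohnSpace X] :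
    HasODT X := by
  intro U hU x hacc
  -- x ∈ closure (U \ {x})
  have hcl : x ∈ closure (U \ {x}) := by
    rw [mem_closure_iff_nhds]
    intro t ht
    obtain ⟨y, ⟨hyt, hyU⟩, hyx⟩ := accPt_iff_nhds.1 hacc t ht
    exact ⟨y, hyt, hyU, hyx⟩
  obtain ⟨u, hu, hconv⟩ := mem_closure_iff_seq_limit.1 hcl
  obtain ⟨W, k, hWo, hWU, huW, hkmono, hdisj⟩ :=
    aux_disjoint_opens U hU x u (fun n => ⟨(hu n).1, (hu n).2⟩) hconv
  refine ⟨⋃ m, W (2 * m), ⋃ m, W (2 * m + 1), isOpen_iUnion fun m => hWo _,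
    isOpen_iUnion fun m => hWo _, iUnion_subset fun m => hWU _, iUnion_subset fun m => hWU _,
    ?_, ?_, ?_⟩
  · apply eq_empty_iff_forall_notMem.2
    rintro y ⟨hy1, hy2⟩
    obtain ⟨a, ha⟩ := mem_iUnion.1 hy1
    obtain ⟨b, hb⟩ := mem_iUnion.1 hy2
    rcases Nat.lt_or_ge (2 * a) (2 * b + 1) with h | h
    · exact eq_empty_iff_forall_notMem.1 (hdisj _ _ h) y ⟨ha, hb⟩
    · have h' : 2 * b + 1 < 2 * a := lt_of_le_of_ne h (by omega)
      exact eq_empty_iff_forall_notMem.1 (hdisj _ _ h') y ⟨hb, ha⟩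
  · rw [accPt_iff_nhds]
    intro t ht
    have : Filter.Tendsto (fun m => u (k (2 * m))) atTop (𝓝 x) :=
      hconv.comp ((hkmono.comp (strictMono_mul_left_of_pos two_pos)).tendsto_atTop)
    obtain ⟨m, hm⟩ := (this.eventually (eventually_mem_nhds_iff.mpr ht)).exists
    exact ⟨u (k (2 * m)), ⟨mem_of_mem_nhds hm, mem_iUnion.2 ⟨m, huW _⟩⟩, (hu _).2⟩
  · rw [accPt_iff_nhds]
    intro t ht
    have : Filter.Tendsto (fun m => u (k (2 * m + 1))) atTop (𝓝 x) := by
      apply hconv.comp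
      apply (hkmono.comp (f := fun m => 2 * m + 1) ?_).tendsto_atTop
      intro a b hab; show 2 * a + 1 < 2 * b + 1; omega
    obtain ⟨m, hm⟩ := (this.eventually (eventually_mem_nhds_iff.mpr ht)).exists
    exact ⟨u (k (2 * m + 1)), ⟨mem_of_mem_nhds hm, mem_iUnion.2 ⟨m, huW _⟩⟩, (hu _).2⟩
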